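/- Let G be a group, S a T_s-set of sequences in G, H a closed normal subgroup of (G, τ_S), and π : G → G/H the quotient homomorphism. Then π(S) := {(π(u_n)) : (u_n) ∈ S} is a T_s-set of sequences in G/H, and the quotient topology on G/H coincides with τ_{π(S)}. In particular, a Hausdorff quotient of an s-group is an s-group. -/

import Mathlib

open Filter Topology Pointwise

/-- `u` converges to the identity in the group topology `t`. -/
def TendstoOne {G : Type*} [Group G] (t : GroupTopology G) (u : ℕ → G) : Prop :=
  Filter.Tendsto u Filter.atTop (@nhds G t.toTopologicalSpace 1)

/-- The group topology `t` is Hausdorff. -/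
def IsHausdorffGT {G : Type*} [Group G] (t : GroupTopology G) : Prop :=
  @T2Space G t.toTopologicalSpace

/-- `S` is a `T_s`-set of sequences: some Hausdorff group topology makes every
sequence of `S` converge to the identity. -/
def IsTsSet {G : Type*} [Group G] (S : Set (ℕ → G)) : Prop :=
  ∃ t : GroupTopology G, IsHausdorffGT t ∧ ∀ u ∈ S, TendstoOne t u

/-- `τ` is the finest Hausdorff group topology on `G` in which every sequence of `S`
converges to the identity (recall that in Mathlib's order on topologies, finer = smaller). -/
def IsTauS {G : Type*} [Group G] (S : Set (ℕ → G)) (τ : GroupTopology G) : Prop :=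
  IsHausdorffGT τ ∧ (∀ u ∈ S, TendstoOne τ u) ∧
    ∀ t : GroupTopology G, IsHausdorffGT t → (∀ u ∈ S, TendstoOne t u) → τ ≤ t

/-- The given topological-group structure on `G`, as a term of `GroupTopology G`. -/
def ambientGT (G : Type*) [Group G] [τ : TopologicalSpace G] [h : IsTopologicalGroup G] :
    GroupTopology G := ⟨τ, h⟩

/-- The set of all sequences converging to the identity in a group topology. -/
def SeqConvOne {G : Type*} [Group G] (t : GroupTopology G) : Set (ℕ → G) :=
  {u | TendstoOne t u}

/-- `(G, τ)` is an `s`-group: its topology is the finest Hausdorff group topology in which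
every member of some `T_s`-set of sequences converges to the identity. -/
def IsSGroup (G : Type*) [Group G] [TopologicalSpace G] [IsTopologicalGroup G] [T2Space G] :
    Prop :=
  ∃ S : Set (ℕ → G), IsTauS S (ambientGT G)

/-- if `S` is a `T_s`-set in `G` with finest topology `τ_S`, `H` is a
`τ_S`-closed normal subgroup and `τ_Q` is the quotient topology on `G ⧸ H` (a group
topology), then the image `π(S)` of `S` under the quotient map is a `T_s`-set in `G ⧸ H`
and `τ_Q` is the finest Hausdorff group topology in which all sequences of `π(S)` converge
to the identity. -/
theorem stmt7 {G : Type*} [Group G] (S : Set (ℕ → G)) (τS : GroupTopology G)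
    (hτS : IsTauS S τS) (H : Subgroup G) [H.Normal]
    (hH : @IsClosed G τS.toTopologicalSpace (H : Set G))
    (τQ : GroupTopology (G ⧸ H))
    (hτQ : τQ.toTopologicalSpace =
      TopologicalSpace.coinduced (QuotientGroup.mk : G → G ⧸ H) τS.toTopologicalSpace) :
    IsTsSet ((fun u => (QuotientGroup.mk : G → G ⧸ H) ∘ u) '' S) ∧
      IsTauS ((fun u => (QuotientGroup.mk : G → G ⧸ H) ∘ u) '' S) τQ := by
  obtain ⟨hT2, hconv, hmin⟩ := hτS
  -- τQ is Hausdorff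
  have hT2Q : IsHausdorffGT τQ := by
    letI := τS.toTopologicalSpace
    haveI := τS.toIsTopologicalGroup
    haveI : T2Space G := hT2
    haveI : IsClosed (H : Set G) := hH
    have heq : τQ.toTopologicalSpace = QuotientGroup.instTopologicalSpace H := hτQ
    rw [IsHausdorffGT, heq]
    infer_instance
  -- the quotient map is continuous
  have hcont : Continuous[τS.toTopologicalSpace, τQ.toTopologicalSpace]
      (QuotientGroup.mk : G → G ⧸ H) := by
    rw [hτQ]; exact continuous_coinduced_rng
  -- all sequences of π(S) converge to 1 in τQ
  have hconvQ : ∀ v ∈ (fun u => (QuotientGroup.mk : G → G ⧸ H) ∘ u) '' S,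
      TendstoOne τQ v := by
    rintro v ⟨u, hu, rfl⟩
    letI := τS.toTopologicalSpace
    letI := τQ.toTopologicalSpace
    have h1 : (1 : G ⧸ H) = QuotientGroup.mk (1 : G) := rfl
    unfold TendstoOne
    rw [h1]
    exact (hcont.tendsto 1).comp (hconv u hu)
  -- minimality
  have hminQ : ∀ t : GroupTopology (G ⧸ H), IsHausdorffGT t →
      (∀ v ∈ (fun u => (QuotientGroup.mk : G → G ⧸ H) ∘ u) '' S, TendstoOne t v) →
      τQ ≤ t := by
    intro t ht htconv
    -- pull back `t` along the quotient map
    set tG : GroupTopology G :=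
      ⟨TopologicalSpace.induced (QuotientGroup.mk : G → G ⧸ H) t.toTopologicalSpace,
        letI := t.toTopologicalSpace
        haveI := t.toIsTopologicalGroup
        topologicalGroup_induced (QuotientGroup.mk' H)⟩ with htG
    set t' : GroupTopology G := τS ⊓ tG with ht'
    -- t' is Hausdorff since it is finer than τS
    have ht'T2 : IsHausdorffGT t' := by
      have hle : t'.toTopologicalSpace ≤ τS.toTopologicalSpace := by
        rw [ht', GroupTopology.toTopologicalSpace_inf]; exact inf_le_left
      exact t2Space_antitone hle hT2
    -- all sequences of S converge to 1 in t'
    have ht'conv : ∀ u ∈ S, TendstoOne t' u := by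
      intro u hu
      letI := t.toTopologicalSpace
      unfold TendstoOne
      rw [ht', GroupTopology.toTopologicalSpace_inf, _root_.nhds_inf, Filter.tendsto_inf]
      refine ⟨hconv u hu, ?_⟩
      show Filter.Tendsto u Filter.atTop
        (@nhds G (TopologicalSpace.induced (QuotientGroup.mk : G → G ⧸ H)
          t.toTopologicalSpace) 1)
      rw [nhds_induced, Filter.tendsto_comap_iff]
      have := htconv ((QuotientGroup.mk : G → G ⧸ H) ∘ u) ⟨u, hu, rfl⟩
      exact this
    -- hence τS ≤ t', so τS ≤ tG, so τQ ≤ t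
    have h1 : τS ≤ t' := hmin t' ht'T2 ht'conv
    have h2 : τS.toTopologicalSpace ≤ tG.toTopologicalSpace :=
      le_trans (GroupTopology.toTopologicalSpace_le.2 h1)
        (by rw [ht', GroupTopology.toTopologicalSpace_inf]; exact inf_le_right)
    have h3 : TopologicalSpace.coinduced (QuotientGroup.mk : G → G ⧸ H)
        τS.toTopologicalSpace ≤ t.toTopologicalSpace :=
      (coinduced_le_iff_le_induced).2 h2
    rw [← GroupTopology.toTopologicalSpace_le, hτQ]
    exact h3
  exact ⟨⟨τQ, hT2Q, hconvQ⟩, hT2Q, hconvQ, hminQ⟩
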